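/- Let f : ℝ^n → ℝ be differentiable and satisfy the local Regularity Condition RC(μ,λ,ε) with constants μ, λ, ε > 0 at a local minimizer x⋆ (so ⟨∇f(z), z − x⋆⟩ ≥ (μ/2)‖∇f(z)‖² + (λ/2)‖z − x⋆‖² for all z ∈ N_ε(x⋆) := {z : ‖z − x⋆‖ ≤ ε‖x⋆‖}, and ∇f(x⋆) = 0). Consider the general accelerated gradient method with parameters α > 0 and β₁, β₂ ∈ [0,1): y_k = (1 + β₂)z_k − β₂z_{k−1}, z_{k+1} = (1 + β₁)z_k − β₁z_{k−1} − α∇f(y_k), with system matrices A = [[1 + β₁, −β₁],[1, 0]], B = [−α; 0], C = [1 + β₂, −β₂], D = 0, state φ_k = (z_k, z_{k−1}) ∈ ℝ^{2n} and fixed point φ⋆ = (x⋆, x⋆). Suppose there exist a symmetric positive definite P ∈ ℝ^{2×2} and ρ ∈ (0,1) such that [[AᵀPA − ρ²P, AᵀPB],[BᵀPA, BᵀPB]] + [[C, D],[0_{1×2}, 1]]ᵀ [[−λ, 1],[1, −μ]] [[C, D],[0_{1×2}, 1]] ⪯ 0. If z₋₁, z₀ ∈ N_{ε/√(10·cond(P))}(x⋆),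 then for all k ≥ 0, ‖φ_k − φ⋆‖ ≤ √(cond(P)) ρ^k ‖φ₀ − φ⋆‖; in particular z_k converges linearly to x⋆. -/

import Mathlib

open Matrix InnerProductSpace

lemma aux_sub_smul_psd {m : Type*} [Fintype m] [DecidableEq m] (P : Matrix m m ℝ)
    (hP : P.IsHermitian) (c : ℝ) (hc : ∀ i, c ≤ hP.eigenvalues i) :
    (P - c • 1).PosSemidef := by
  have hspec := hP.spectral_theorem
  rw [Unitary.conjStarAlgAut_apply] at hspec
  set U : Matrix m m ℝ := (hP.eigenvectorUnitary : Matrix m m ℝ) with hU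
  have hUU : U * star U = 1 := Matrix.mem_unitaryGroup_iff.mp hP.eigenvectorUnitary.2
  have key : P - c • 1 = U * diagonal (fun i => hP.eigenvalues i - c) * star U := by
    have h1 : (diagonal (fun i => hP.eigenvalues i - c) : Matrix m m ℝ)
        = diagonal (RCLike.ofReal ∘ hP.eigenvalues) - c • 1 := by
      ext i j
      by_cases h : i = j <;> simp [diagonal, h, Matrix.one_apply, Matrix.smul_apply]
    rw [h1, Matrix.mul_sub, Matrix.sub_mul, ← hspec]
    congr 1
    rw [Matrix.mul_smul, Matrix.mul_one, Matrix.smul_mul, hUU]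
  rw [key]
  exact (Matrix.posSemidef_diagonal_iff.mpr (fun i => sub_nonneg.mpr (hc i))).mul_mul_conjTranspose_same U

lemma aux_smul_sub_psd {m : Type*} [Fintype m] [DecidableEq m] (P : Matrix m m ℝ)
    (hP : P.IsHermitian) (c : ℝ) (hc : ∀ i, hP.eigenvalues i ≤ c) :
    (c • 1 - P).PosSemidef := by
  have hspec := hP.spectral_theorem
  rw [Unitary.conjStarAlgAut_apply] at hspec
  set U : Matrix m m ℝ := (hP.eigenvectorUnitary : Matrix m m ℝ) with hU
  have hUU : U * star U = 1 := Matrix.mem_unitaryGroup_iff.mp hP.eigenvectorUnitary.2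
  have key : c • 1 - P = U * diagonal (fun i => c - hP.eigenvalues i) * star U := by
    have h1 : (diagonal (fun i => c - hP.eigenvalues i) : Matrix m m ℝ)
        = c • 1 - diagonal (RCLike.ofReal ∘ hP.eigenvalues) := by
      ext i j
      by_cases h : i = j <;> simp [diagonal, h, Matrix.one_apply, Matrix.smul_apply]
    rw [h1, Matrix.mul_sub, Matrix.sub_mul, ← hspec]
    congr 1
    rw [Matrix.mul_smul, Matrix.mul_one, Matrix.smul_mul, hUU]
  rw [key]
  exact (Matrix.posSemidef_diagonal_iff.mpr (fun i => sub_nonneg.mpr (hc i))).mul_mul_conjTranspose_same U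

lemma aux_quad_bounds (P : Matrix (Fin 2) (Fin 2) ℝ) (hP : P.IsHermitian) (s t : ℝ) :
    (⨅ i, hP.eigenvalues i) * (s ^ 2 + t ^ 2) ≤
      P 0 0 * s ^ 2 + (P 0 1 + P 1 0) * s * t + P 1 1 * t ^ 2 ∧
    P 0 0 * s ^ 2 + (P 0 1 + P 1 0) * s * t + P 1 1 * t ^ 2 ≤
      (⨆ i, hP.eigenvalues i) * (s ^ 2 + t ^ 2) := by
  have hlo : ∀ i, (⨅ i, hP.eigenvalues i) ≤ hP.eigenvalues i := fun i =>
    ciInf_le (Set.Finite.bddBelow (Set.finite_range _)) i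
  have hhi : ∀ i, hP.eigenvalues i ≤ (⨆ i, hP.eigenvalues i) := fun i =>
    le_ciSup (Set.Finite.bddAbove (Set.finite_range _)) i
  have h1 := (aux_sub_smul_psd P hP _ hlo).dotProduct_mulVec_nonneg ![s, t]
  have h2 := (aux_smul_sub_psd P hP _ hhi).dotProduct_mulVec_nonneg ![s, t]
  simp [dotProduct, Matrix.mulVec, Fin.sum_univ_two, Matrix.sub_apply,
    Matrix.smul_apply, Matrix.one_apply] at h1 h2
  constructor <;> nlinarith [h1, h2]

lemma aux_lmi_scalar (P : Matrix (Fin 2) (Fin 2) ℝ) (μ lam α β₁ β₂ ρ : ℝ)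
    (hLMI : (-(fromBlocks
        ((!![1 + β₁, -β₁; 1, 0])ᵀ * P * !![1 + β₁, -β₁; 1, 0] - ρ ^ 2 • P)
        ((!![1 + β₁, -β₁; 1, 0])ᵀ * P * !![-α; 0])
        ((!![-α; 0])ᵀ * P * !![1 + β₁, -β₁; 1, 0])
        ((!![-α; 0])ᵀ * P * !![-α; 0]) +
      (fromBlocks !![1 + β₂, -β₂] (0 : Matrix (Fin 1) (Fin 1) ℝ) 0
        (1 : Matrix (Fin 1) (Fin 1) ℝ))ᵀ *
      (fromBlocks (-lam • (1 : Matrix (Fin 1) (Fin 1) ℝ)) (1 : Matrix (Fin 1) (Fin 1) ℝ)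
        (1 : Matrix (Fin 1) (Fin 1) ℝ) (-μ • (1 : Matrix (Fin 1) (Fin 1) ℝ))) *
      (fromBlocks !![1 + β₂, -β₂] (0 : Matrix (Fin 1) (Fin 1) ℝ) 0
        (1 : Matrix (Fin 1) (Fin 1) ℝ)))).PosSemidef)
    (s t u : ℝ) :
    P 0 0 * ((1 + β₁) * s - β₁ * t - α * u) ^ 2 +
      (P 0 1 + P 1 0) * ((1 + β₁) * s - β₁ * t - α * u) * s + P 1 1 * s ^ 2 ≤
    ρ ^ 2 * (P 0 0 * s ^ 2 + (P 0 1 + P 1 0) * s * t + P 1 1 * t ^ 2) +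
      (lam * ((1 + β₂) * s - β₂ * t) ^ 2 - 2 * ((1 + β₂) * s - β₂ * t) * u + μ * u ^ 2) := by
  have h := hLMI.dotProduct_mulVec_nonneg (Sum.elim ![s, t] ![u])
  simp only [dotProduct, Matrix.mulVec, Fintype.sum_sum_type, Fin.sum_univ_two,
    Fin.sum_univ_one, Matrix.neg_apply, Matrix.add_apply, Matrix.fromBlocks_apply₁₁,
    Matrix.fromBlocks_apply₁₂, Matrix.fromBlocks_apply₂₁, Matrix.fromBlocks_apply₂₂,
    Matrix.mul_apply, Matrix.transpose_apply, Matrix.sub_apply, Matrix.smul_apply,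
    Matrix.one_apply, Matrix.zero_apply, Sum.elim_inl, Sum.elim_inr, star_trivial,
    Matrix.cons_val_zero, Matrix.cons_val_one, Matrix.head_cons, Matrix.head_fin_const,
    smul_eq_mul, Matrix.of_apply, Matrix.cons_val', Matrix.empty_val', Matrix.cons_val_fin_one, if_true] at h
  nlinarith [h]

set_option maxHeartbeats 1000000 in
theorem agd_local_RC_linear_convergence {n : ℕ}
    (f : EuclideanSpace ℝ (Fin n) → ℝ)
    (μ lam ε : ℝ) (hμ : 0 < μ) (hlam : 0 < lam) (hε : 0 < ε)
    (hdiff : Differentiable ℝ f)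
    (xs : EuclideanSpace ℝ (Fin n))
    (hmin : ∀ z, ‖z - xs‖ ≤ ε * ‖xs‖ → f xs ≤ f z)
    (hgrad0 : gradient f xs = 0)
    (hRC : ∀ z : EuclideanSpace ℝ (Fin n), ‖z - xs‖ ≤ ε * ‖xs‖ →
      ⟪gradient f z, z - xs⟫_ℝ ≥ μ / 2 * ‖gradient f z‖ ^ 2 + lam / 2 * ‖z - xs‖ ^ 2)
    (α β₁ β₂ : ℝ) (hα : 0 < α)
    (hβ₁ : β₁ ∈ Set.Ico (0 : ℝ) 1) (hβ₂ : β₂ ∈ Set.Ico (0 : ℝ) 1)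
    (z y : ℕ → EuclideanSpace ℝ (Fin n))
    (hy : ∀ k, y k = (1 + β₂) • z (k + 1) - β₂ • z k)
    (hz : ∀ k, z (k + 2) = (1 + β₁) • z (k + 1) - β₁ • z k - α • gradient f (y k))
    (φ : ℕ → EuclideanSpace ℝ (Fin 2 × Fin n))
    (hφ : ∀ k, φ k = WithLp.toLp 2 (fun p : Fin 2 × Fin n => ![z (k + 1), z k] p.1 p.2))
    (φs : EuclideanSpace ℝ (Fin 2 × Fin n))
    (hφs : φs = WithLp.toLp 2 (fun p : Fin 2 × Fin n => xs p.2))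
    (P : Matrix (Fin 2) (Fin 2) ℝ) (hP : P.IsHermitian) (hPpos : P.PosDef)
    (ρ : ℝ) (hρ : ρ ∈ Set.Ioo (0 : ℝ) 1)
    (hLMI : (-(fromBlocks
        ((!![1 + β₁, -β₁; 1, 0])ᵀ * P * !![1 + β₁, -β₁; 1, 0] - ρ ^ 2 • P)
        ((!![1 + β₁, -β₁; 1, 0])ᵀ * P * !![-α; 0])
        ((!![-α; 0])ᵀ * P * !![1 + β₁, -β₁; 1, 0])
        ((!![-α; 0])ᵀ * P * !![-α; 0]) +
      (fromBlocks !![1 + β₂, -β₂] (0 : Matrix (Fin 1) (Fin 1) ℝ) 0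
        (1 : Matrix (Fin 1) (Fin 1) ℝ))ᵀ *
      (fromBlocks (-lam • (1 : Matrix (Fin 1) (Fin 1) ℝ)) (1 : Matrix (Fin 1) (Fin 1) ℝ)
        (1 : Matrix (Fin 1) (Fin 1) ℝ) (-μ • (1 : Matrix (Fin 1) (Fin 1) ℝ))) *
      (fromBlocks !![1 + β₂, -β₂] (0 : Matrix (Fin 1) (Fin 1) ℝ) 0
        (1 : Matrix (Fin 1) (Fin 1) ℝ)))).PosSemidef)
    (hinit0 : ‖z 0 - xs‖ ≤
      ε / Real.sqrt (10 * ((⨆ i, hP.eigenvalues i) / (⨅ i, hP.eigenvalues i))) * ‖xs‖)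
    (hinit1 : ‖z 1 - xs‖ ≤
      ε / Real.sqrt (10 * ((⨆ i, hP.eigenvalues i) / (⨅ i, hP.eigenvalues i))) * ‖xs‖) :
    ∀ k, ‖φ k - φs‖ ≤
        Real.sqrt ((⨆ i, hP.eigenvalues i) / (⨅ i, hP.eigenvalues i)) * ρ ^ k * ‖φ 0 - φs‖ ∧
      ‖z (k + 1) - xs‖ ≤
        Real.sqrt ((⨆ i, hP.eigenvalues i) / (⨅ i, hP.eigenvalues i)) * ρ ^ k * ‖φ 0 - φs‖ := by
  obtain ⟨hβ₁0, hβ₁1⟩ := hβ₁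
  obtain ⟨hβ₂0, hβ₂1⟩ := hβ₂
  obtain ⟨hρ0, hρ1⟩ := hρ
  have hsc : ∀ s t u : ℝ,
      P 0 0 * ((1 + β₁) * s - β₁ * t - α * u) ^ 2 +
        (P 0 1 + P 1 0) * ((1 + β₁) * s - β₁ * t - α * u) * s + P 1 1 * s ^ 2 ≤
      ρ ^ 2 * (P 0 0 * s ^ 2 + (P 0 1 + P 1 0) * s * t + P 1 1 * t ^ 2) +
        (lam * ((1 + β₂) * s - β₂ * t) ^ 2 - 2 * ((1 + β₂) * s - β₂ * t) * u + μ * u ^ 2) :=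
    fun s t u => aux_lmi_scalar P μ lam α β₁ β₂ ρ hLMI s t u
  clear hLMI hmin hdiff hgrad0
  set lmin : ℝ := ⨅ i, hP.eigenvalues i with hlmin_def
  set lmax : ℝ := ⨆ i, hP.eigenvalues i with hlmax_def
  have heigpos : ∀ i, 0 < hP.eigenvalues i := fun i => hPpos.eigenvalues_pos i
  have hlmin_le : ∀ i, lmin ≤ hP.eigenvalues i := fun i =>
    ciInf_le (Set.Finite.bddBelow (Set.finite_range _)) i
  have hlmax_ge : ∀ i, hP.eigenvalues i ≤ lmax := fun i =>
    le_ciSup (Set.Finite.bddAbove (Set.finite_range _)) i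
  have hlmin_pos : 0 < lmin := by
    have h1 : min (hP.eigenvalues 0) (hP.eigenvalues 1) ≤ lmin :=
      le_ciInf fun i => by fin_cases i; exacts [min_le_left _ _, min_le_right _ _]
    exact lt_of_lt_of_le (lt_min (heigpos 0) (heigpos 1)) h1
  have hlmax_pos : 0 < lmax := lt_of_lt_of_le (heigpos 0) (hlmax_ge 0)
  clear_value lmin lmax
  set cond : ℝ := lmax / lmin with hcond_def
  clear_value cond
  have hcond_pos : 0 < cond := by rw [hcond_def]; exact div_pos hlmax_pos hlmin_pos
  have hcond_one : 1 ≤ cond := by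
    rw [hcond_def]; exact (one_le_div hlmin_pos).mpr ((hlmin_le 0).trans (hlmax_ge 0))
  -- coordinates
  set a : ℕ → Fin n → ℝ := fun k j => z (k + 1) j - xs j with ha_def
  set b : ℕ → Fin n → ℝ := fun k j => z k j - xs j with hb_def
  set g : ℕ → Fin n → ℝ := fun k j => gradient f (y k) j with hg_def
  set r : ℕ → Fin n → ℝ := fun k j => (1 + β₂) * a k j - β₂ * b k j with hr_def
  set V : ℕ → ℝ := fun k => ∑ j, (P 0 0 * (a k j) ^ 2 +
      (P 0 1 + P 1 0) * a k j * b k j + P 1 1 * (b k j) ^ 2) with hV_def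
  clear_value a b g r V
  -- norm identities
  have hnφ : ∀ k, ‖φ k - φs‖ ^ 2 = ∑ j, (a k j) ^ 2 + ∑ j, (b k j) ^ 2 := by
    intro k
    rw [EuclideanSpace.norm_eq, Real.sq_sqrt (by positivity), hφ, hφs, Fintype.sum_prod_type]
    simp [Real.norm_eq_abs, sq_abs, Fin.sum_univ_two, ha_def, hb_def]
  have hna : ∀ k, ‖z (k + 1) - xs‖ ^ 2 = ∑ j, (a k j) ^ 2 := by
    intro k
    rw [EuclideanSpace.norm_eq, Real.sq_sqrt (by positivity)]
    simp [Real.norm_eq_abs, sq_abs, ha_def]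
  have hnb : ∀ k, ‖z k - xs‖ ^ 2 = ∑ j, (b k j) ^ 2 := by
    intro k
    rw [EuclideanSpace.norm_eq, Real.sq_sqrt (by positivity)]
    simp [Real.norm_eq_abs, sq_abs, hb_def]
  have hry : ∀ k j, (y k - xs) j = r k j := by
    intro k j
    rw [hy k]
    simp [ha_def, hb_def, hr_def]
    ring
  have hnr : ∀ k, ‖y k - xs‖ ^ 2 = ∑ j, (r k j) ^ 2 := by
    intro k
    rw [EuclideanSpace.norm_eq, Real.sq_sqrt (by positivity)]
    simp only [Real.norm_eq_abs, sq_abs]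
    exact Finset.sum_congr rfl fun j _ => by rw [hry k j]
  have hng : ∀ k, ‖gradient f (y k)‖ ^ 2 = ∑ j, (g k j) ^ 2 := by
    intro k
    rw [EuclideanSpace.norm_eq, Real.sq_sqrt (by positivity)]
    simp [Real.norm_eq_abs, sq_abs, hg_def]
  have hinner : ∀ k, ⟪gradient f (y k), y k - xs⟫_ℝ = ∑ j, g k j * r k j := by
    intro k
    rw [PiLp.inner_apply]
    refine Finset.sum_congr rfl fun j _ => ?_
    rw [hry k j]
    simp only [hg_def, RCLike.inner_apply, starRingEnd_apply, star_trivial]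
    ring
  -- V bounds via eigenvalues
  have hVlo : ∀ k, lmin * ‖φ k - φs‖ ^ 2 ≤ V k := by
    intro k
    rw [hnφ k, hV_def]
    rw [← Finset.sum_add_distrib, Finset.mul_sum, hlmin_def]
    exact Finset.sum_le_sum fun j _ => (aux_quad_bounds P hP (a k j) (b k j)).1
  have hVhi : ∀ k, V k ≤ lmax * ‖φ k - φs‖ ^ 2 := by
    intro k
    rw [hnφ k, hV_def]
    rw [← Finset.sum_add_distrib, Finset.mul_sum, hlmax_def]
    exact Finset.sum_le_sum fun j _ => (aux_quad_bounds P hP (a k j) (b k j)).2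
  have hV0_nonneg : 0 ≤ V 0 := le_trans (by positivity) (hVlo 0)
  -- initialization bound
  have hsq10 : Real.sqrt (10 * cond) ^ 2 = 10 * cond := Real.sq_sqrt (by positivity)
  have hφ0_bound : ‖φ 0 - φs‖ ^ 2 ≤ ε ^ 2 * ‖xs‖ ^ 2 / (5 * cond) := by
    have h1 : ‖z 1 - xs‖ ^ 2 ≤ (ε / Real.sqrt (10 * cond) * ‖xs‖) ^ 2 :=
      pow_le_pow_left₀ (norm_nonneg _) hinit1 2
    have h0 : ‖z 0 - xs‖ ^ 2 ≤ (ε / Real.sqrt (10 * cond) * ‖xs‖) ^ 2 :=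
      pow_le_pow_left₀ (norm_nonneg _) hinit0 2
    have hval : (ε / Real.sqrt (10 * cond) * ‖xs‖) ^ 2 = ε ^ 2 * ‖xs‖ ^ 2 / (10 * cond) := by
      rw [mul_pow, div_pow, hsq10]; ring
    have hna0 := hna 0
    norm_num at hna0
    have : ‖φ 0 - φs‖ ^ 2 = ‖z 1 - xs‖ ^ 2 + ‖z 0 - xs‖ ^ 2 := by
      rw [hnφ 0, hna0, hnb 0]
    rw [this]
    rw [hval] at h1 h0
    have hc : ε ^ 2 * ‖xs‖ ^ 2 / (10 * cond) + ε ^ 2 * ‖xs‖ ^ 2 / (10 * cond) =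
        ε ^ 2 * ‖xs‖ ^ 2 / (5 * cond) := by
      field_simp
      ring
    linarith
  -- key induction: V k ≤ ρ^(2k) V 0
  have hkey : ∀ k, V k ≤ ρ ^ (2 * k) * V 0 := by
    intro k
    induction k with
    | zero => simp
    | succ k ih =>
      -- y k in neighborhood
      have hφk : lmin * ‖φ k - φs‖ ^ 2 ≤ lmax * ‖φ 0 - φs‖ ^ 2 := by
        have h2 : ρ ^ (2 * k) ≤ 1 := pow_le_one₀ hρ0.le hρ1.le
        have h3 : ρ ^ (2 * k) * V 0 ≤ V 0 := by nlinarith [hV0_nonneg]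
        exact le_trans (hVlo k) (le_trans (le_trans ih h3) (hVhi 0))
      have hφk2 : ‖φ k - φs‖ ^ 2 ≤ cond * ‖φ 0 - φs‖ ^ 2 := by
        have hcl : lmin * (cond * ‖φ 0 - φs‖ ^ 2) = lmax * ‖φ 0 - φs‖ ^ 2 := by
          rw [hcond_def]; field_simp
        have h4 : lmin * ‖φ k - φs‖ ^ 2 ≤ lmin * (cond * ‖φ 0 - φs‖ ^ 2) := by
          rw [hcl]; exact hφk
        exact le_of_mul_le_mul_left h4 hlmin_pos
      have hyk : ‖y k - xs‖ ≤ ε * ‖xs‖ := by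
        have hr5 : ∀ j, (r k j) ^ 2 ≤ 5 * ((a k j) ^ 2 + (b k j) ^ 2) := by
          intro j
          have := sq_nonneg (β₂ * a k j + (1 + β₂) * b k j)
          have h2 : (1 + β₂) ^ 2 + β₂ ^ 2 ≤ 5 := by nlinarith
          simp only [hr_def]
          nlinarith [sq_nonneg (a k j), sq_nonneg (b k j),
            sq_nonneg (β₂ * a k j + (1 + β₂) * b k j), hβ₂0, hβ₂1.le]
        have hsum5 : ‖y k - xs‖ ^ 2 ≤ 5 * ‖φ k - φs‖ ^ 2 := by
          rw [hnr k, hnφ k, ← Finset.sum_add_distrib, Finset.mul_sum]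
          exact Finset.sum_le_sum fun j _ => hr5 j
        have hfin : ‖y k - xs‖ ^ 2 ≤ (ε * ‖xs‖) ^ 2 := by
          have : 5 * (cond * (ε ^ 2 * ‖xs‖ ^ 2 / (5 * cond))) = (ε * ‖xs‖) ^ 2 := by
            field_simp
          nlinarith [hφ0_bound, hφk2, hcond_pos]
        have := Real.sqrt_le_sqrt hfin
        rwa [Real.sqrt_sq (norm_nonneg _), Real.sqrt_sq (by positivity)] at this
      -- the sector condition
      have hsec : lam * (∑ j, (r k j) ^ 2) - 2 * (∑ j, g k j * r k j) +
          μ * (∑ j, (g k j) ^ 2) ≤ 0 := by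
        have := hRC (y k) hyk
        rw [hinner k, hng k, hnr k] at this
        linarith
      -- coordinate update
      have hco : ∀ j, a (k + 1) j = (1 + β₁) * a k j - β₁ * b k j - α * g k j := by
        intro j
        have hzz := hz k
        have : z (k + 1 + 1) j = (1 + β₁) * z (k + 1) j - β₁ * z k j -
            α * gradient f (y k) j := by
          rw [show k + 1 + 1 = k + 2 from rfl, hzz]; simp
        simp only [ha_def, hb_def, hg_def]
        rw [this]; ring
      have hbo : ∀ j, b (k + 1) j = a k j := fun j => by
        simp only [hb_def, ha_def]
      -- step inequality
      have hstep : V (k + 1) ≤ ρ ^ 2 * V k + (lam * (∑ j, (r k j) ^ 2) -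
          2 * (∑ j, g k j * r k j) + μ * (∑ j, (g k j) ^ 2)) := by
        have hsum := Finset.sum_le_sum fun j (_ : j ∈ Finset.univ) =>
          hsc (a k j) (b k j) (g k j)
        have hL : V (k + 1) = ∑ j, (P 0 0 * ((1 + β₁) * a k j - β₁ * b k j - α * g k j) ^ 2 +
            (P 0 1 + P 1 0) * ((1 + β₁) * a k j - β₁ * b k j - α * g k j) * a k j +
            P 1 1 * (a k j) ^ 2) := by
          rw [hV_def]
          exact Finset.sum_congr rfl fun j _ => by rw [hco j, hbo j]
        have hR : ∑ j, (ρ ^ 2 * (P 0 0 * (a k j) ^ 2 + (P 0 1 + P 1 0) * a k j * b k j +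
              P 1 1 * (b k j) ^ 2) +
            (lam * ((1 + β₂) * a k j - β₂ * b k j) ^ 2 -
              2 * ((1 + β₂) * a k j - β₂ * b k j) * g k j + μ * (g k j) ^ 2)) =
            ρ ^ 2 * V k + (lam * (∑ j, (r k j) ^ 2) -
              2 * (∑ j, g k j * r k j) + μ * (∑ j, (g k j) ^ 2)) := by
          rw [hV_def]
          simp only [Finset.mul_sum, ← Finset.sum_add_distrib, ← Finset.sum_sub_distrib]
          exact Finset.sum_congr rfl fun j _ => by simp only [hr_def]; ring
        rw [hL, ← hR]
        exact hsum
      have : V (k + 1) ≤ ρ ^ 2 * V k := by linarith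
      calc V (k + 1) ≤ ρ ^ 2 * V k := this
        _ ≤ ρ ^ 2 * (ρ ^ (2 * k) * V 0) :=
            mul_le_mul_of_nonneg_left ih (by positivity)
        _ = ρ ^ (2 * (k + 1)) * V 0 := by
            rw [← mul_assoc, ← pow_add]
            ring_nf
  -- conclusion
  intro k
  have hmain : ‖φ k - φs‖ ≤ Real.sqrt cond * ρ ^ k * ‖φ 0 - φs‖ := by
    have h1 : lmin * ‖φ k - φs‖ ^ 2 ≤ ρ ^ (2 * k) * (lmax * ‖φ 0 - φs‖ ^ 2) := by
      have := mul_le_mul_of_nonneg_left (hVhi 0) (pow_nonneg (le_of_lt hρ0) (2 * k))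
      exact le_trans (hVlo k) (le_trans (hkey k) this)
    have h2 : ‖φ k - φs‖ ^ 2 ≤ (Real.sqrt cond * ρ ^ k * ‖φ 0 - φs‖) ^ 2 := by
      have hval : (Real.sqrt cond * ρ ^ k * ‖φ 0 - φs‖) ^ 2 =
          cond * (ρ ^ (2 * k) * ‖φ 0 - φs‖ ^ 2) := by
        rw [mul_pow, mul_pow, Real.sq_sqrt (le_of_lt hcond_pos), ← pow_mul]
        ring_nf
      rw [hval]
      have hcl : lmin * (cond * (ρ ^ (2 * k) * ‖φ 0 - φs‖ ^ 2)) =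
          ρ ^ (2 * k) * (lmax * ‖φ 0 - φs‖ ^ 2) := by
        rw [hcond_def]; field_simp
      have h4 : lmin * ‖φ k - φs‖ ^ 2 ≤ lmin * (cond * (ρ ^ (2 * k) * ‖φ 0 - φs‖ ^ 2)) := by
        rw [hcl]; exact h1
      exact le_of_mul_le_mul_left h4 hlmin_pos
    have := Real.sqrt_le_sqrt h2
    rwa [Real.sqrt_sq (norm_nonneg _), Real.sqrt_sq (by positivity)] at this
  refine ⟨hmain, le_trans ?_ hmain⟩
  have h3 : ‖z (k + 1) - xs‖ ^ 2 ≤ ‖φ k - φs‖ ^ 2 := by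
    rw [hna k, hnφ k]
    have : (0:ℝ) ≤ ∑ j, (b k j) ^ 2 := by positivity
    linarith
  have := Real.sqrt_le_sqrt h3
  rwa [Real.sqrt_sq (norm_nonneg _), Real.sqrt_sq (norm_nonneg _)] at this
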